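/- Let ẇ > 0 and ŵ > 0 be real numbers, let f₀ ≥ f₁ > 0 be real rewards, and set z = ẇ/(ẇ+ŵ). Then z·(ẇ+f₁)/(ẇ+ŵ+f₁) + (1−z)·ẇ/(ẇ+ŵ+f₀) ≤ z. -/

import Mathlib

/-- One-step conditional-expectation inequality from the proof of Lemma 1:
`ẇ` (here `wd`) is the current weight of the β*-edge, `ŵ` (here `wh`) the weight of the
α*-edge, `f₁ ≤ f₀` the rewards for the longer resp. shorter path, and
`z = ẇ/(ẇ+ŵ)` the normalized weight of the β*-edge. -/
theorem one_step_supermartingale_ineq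
    (wd wh f0 f1 : ℝ) (hwd : 0 < wd) (hwh : 0 < wh)
    (hf1 : 0 < f1) (hf : f1 ≤ f0)
    (z : ℝ) (hz : z = wd / (wd + wh)) :
    z * (wd + f1) / (wd + wh + f1) + (1 - z) * wd / (wd + wh + f0) ≤ z := by
  subst hz
  have hs : 0 < wd + wh := by linarith
  have h1 : 0 < wd + wh + f1 := by linarith
  have h0 : 0 < wd + wh + f0 := by linarith
  rw [div_add_div _ _ (ne_of_gt h1) (ne_of_gt h0), div_le_div_iff₀ (by positivity) hs]
  have e1 : (1 - wd / (wd + wh)) = wh / (wd + wh) := by field_simp; ring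
  rw [e1]
  have key : (wd / (wd + wh) * (wd + f1) * (wd + wh + f0) + (wd + wh + f1) * (wh / (wd + wh) * wd)) * (wd + wh)
      = wd * (wd + f1) * (wd + wh + f0) + (wd + wh + f1) * (wh * wd) := by
    field_simp
  rw [key]
  nlinarith [mul_nonneg (mul_nonneg hwd.le hwh.le) (sub_nonneg.mpr hf), mul_nonneg (mul_nonneg hwd.le hf1.le) (sub_nonneg.mpr hf)]
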